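/- For integers d₁ > 2 and all sufficiently large n₁ (and any n₂ > d₁n₁), the function f : [1, n₂] → ℕ defined by f(x) = 2^x for x ≤ n₁, f(x) = f(x−1) + x + 1 for n₁ < x ≤ d₁n₁, and f(x) = ⌊2^{1/(2d₁)}f(x−1)⌋ for d₁n₁ < x ≤ n₂, is submultiplicative: f(p+q) ≤ f(p)·f(q) whenever p, q ≥ 1 and p + q ≤ n₂. -/

import Mathlib

set_option maxHeartbeats 1000000

lemma aux_lin : ∀ n : ℕ, 3 ≤ n → n + 2 ≤ 2 ^ n := by
  intro n hn
  induction n with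
  | zero => omega
  | succ k ih =>
    rcases Nat.lt_or_ge k 3 with h | h
    · interval_cases k <;> simp_all
    · have h1 := ih h
      have h2 : 1 ≤ 2 ^ k := Nat.one_le_two_pow
      have h3 : 2 ^ (k+1) = 2^k + 2^k := by ring
      omega

lemma aux_cube : ∀ n : ℕ, 30 ≤ n → 8 * n ^ 3 ≤ 2 ^ n := by
  intro n hn
  induction n with
  | zero => omega
  | succ k ih =>
    rcases Nat.lt_or_ge k 30 with h | h
    · have hk : k = 29 := by omega
      subst hk; norm_num
    · have ihk := ih h
      have hstep : 8 * (k+1)^3 ≤ 2 * (8 * k^3) := by nlinarith [sq_nonneg k, h]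
      have h3 : 2 ^ (k+1) = 2 * 2^k := by ring
      omega




/-- Proposition 3.3: the function of the basic construction on `[1, n₂]` is
submultiplicative, for `d₁ > 2` and `n₁` sufficiently large. -/
theorem stmt_9 (d₁ : ℕ) (hd₁ : 2 < d₁) :
    ∃ N : ℕ, ∀ n₁ : ℕ, N ≤ n₁ → ∀ n₂ : ℕ, d₁ * n₁ < n₂ →
      ∀ f : ℕ → ℕ,
        (∀ x : ℕ, 1 ≤ x → x ≤ n₁ → f x = 2 ^ x) →
        (∀ x : ℕ, n₁ < x → x ≤ d₁ * n₁ → f x = f (x - 1) + x + 1) →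
        (∀ x : ℕ, d₁ * n₁ < x → x ≤ n₂ →
          f x = ⌊(2 : ℝ) ^ ((1 : ℝ) / (2 * (d₁ : ℝ))) * (f (x - 1) : ℝ)⌋₊) →
        ∀ p q : ℕ, 1 ≤ p → 1 ≤ q → p + q ≤ n₂ → f (p + q) ≤ f p * f q := by
  refine ⟨d₁ + 30, ?_⟩
  intro n₁ hN n₂ hn₂ f hlo hmid hhi
  set c : ℝ := (2 : ℝ) ^ ((1 : ℝ) / (2 * (d₁ : ℝ))) with hcdef
  have hd3 : 3 ≤ d₁ := hd₁
  have hn30 : 30 ≤ n₁ := by omega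
  have hdn : d₁ ≤ n₁ := by omega
  have hn1pos : 1 ≤ n₁ := by omega
  have hmn : n₁ ≤ d₁ * n₁ := Nat.le_mul_of_pos_left n₁ (by omega)
  have hmn₂ : d₁ * n₁ ≤ n₂ := le_of_lt hn₂
  have hdR : (3 : ℝ) ≤ (d₁ : ℝ) := by exact_mod_cast hd3
  have hdRpos : (0 : ℝ) < (d₁ : ℝ) := by linarith
  have hc0 : 0 < c := Real.rpow_pos_of_pos (by norm_num) _
  have hc1 : 1 < c := by
    rw [hcdef]
    rw [Real.one_lt_rpow_iff_of_pos (by norm_num)]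
    left
    constructor
    · norm_num
    · positivity
  have hc2 : c ≤ 2 := by
    have : c ≤ (2 : ℝ) ^ (1 : ℝ) :=
      Real.rpow_le_rpow_of_exponent_le one_le_two
        (by rw [div_le_one (by linarith)]; linarith)
    simpa [Real.rpow_one] using this
  have hcpow : c ^ (2 * d₁) = 2 := by
    rw [hcdef, ← Real.rpow_natCast ((2:ℝ) ^ ((1:ℝ)/(2*(d₁:ℝ)))) (2*d₁),
      ← Real.rpow_mul (by norm_num : (0:ℝ) ≤ 2)]
    have h : (1 : ℝ) / (2 * (d₁:ℝ)) * ((2*d₁ : ℕ) : ℝ) = 1 := by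
      push_cast
      field_simp
    rw [h, Real.rpow_one]
  have hc4 : 1 + 1 / (4 * (d₁ : ℝ)) < c := by
    have h1 : (1 + 1 / (4 * (d₁:ℝ))) ≤ Real.exp (1 / (4 * (d₁:ℝ))) := by
      have := Real.add_one_le_exp (1 / (4 * (d₁:ℝ))); linarith
    have h2 : (1 + 1 / (4 * (d₁:ℝ))) ^ (2*d₁) ≤ Real.exp (1 / (4 * (d₁:ℝ))) ^ (2*d₁) :=
      pow_le_pow_left₀ (by positivity) h1 _
    have h3 : Real.exp (1 / (4 * (d₁:ℝ))) ^ (2*d₁) = Real.exp (((2*d₁:ℕ):ℝ) * (1 / (4 * (d₁:ℝ)))) :=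
      (Real.exp_nat_mul _ _).symm
    have h4 : ((2*d₁:ℕ):ℝ) * (1 / (4 * (d₁:ℝ))) = 1/2 := by
      push_cast; field_simp; ring
    have h5 : Real.exp ((1:ℝ)/2) < 2 := by
      have he : Real.exp ((1:ℝ)/2) * Real.exp ((1:ℝ)/2) = Real.exp 1 := by
        rw [← Real.exp_add]; norm_num
      nlinarith [Real.exp_one_lt_d9, Real.exp_pos ((1:ℝ)/2)]
    have hexp : (1 + 1 / (4 * (d₁:ℝ))) ^ (2*d₁) < 2 := by
      rw [h4] at h3; rw [h3] at h2; linarith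
    exact lt_of_pow_lt_pow_left₀ (2*d₁) (le_of_lt hc0) (by rw [hcpow]; exact hexp)
  have hcube := aux_cube n₁ hn30
  have t1 : d₁ * d₁ ≤ n₁ * n₁ := Nat.mul_le_mul hdn hdn
  have t2 : d₁ * d₁ * n₁ ≤ n₁ * n₁ * n₁ := Nat.mul_le_mul t1 le_rfl
  have t3 : n₁ ≤ n₁ ^ 3 := Nat.le_self_pow (by norm_num) n₁
  have t4 : n₁ * n₁ * n₁ = n₁ ^ 3 := by ring
  have hnum : 4 * d₁ * (d₁ * n₁ + 1) ≤ 2 ^ n₁ := by nlinarith [t2, t3, t4, hdn, hcube]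
  have h2n4d : 8 * d₁ + 1 ≤ 2 ^ n₁ := by nlinarith [t3, hdn, hn30, hcube]
  -- lower bound 2^n₁ on [n₁, n₂]
  have hlow : ∀ x, n₁ ≤ x → x ≤ n₂ → 2 ^ n₁ ≤ f x := by
    intro x hx
    induction x, hx using Nat.le_induction with
    | base => intro _; rw [hlo n₁ hn1pos le_rfl]
    | succ x hx ih =>
      intro hx2
      have ihx := ih (by omega)
      rcases Nat.lt_or_ge (d₁ * n₁) (x+1) with h | h
      · rw [hhi (x+1) h hx2]
        refine Nat.le_floor ?_
        simp only [Nat.add_sub_cancel]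
        have h1 : ((2^n₁ : ℕ) : ℝ) ≤ (f x : ℝ) := by exact_mod_cast ihx
        calc ((2^n₁ : ℕ) : ℝ) ≤ (f x : ℝ) := h1
          _ = 1 * (f x : ℝ) := (one_mul _).symm
          _ ≤ c * (f x : ℝ) := mul_le_mul_of_nonneg_right (le_of_lt hc1) (Nat.cast_nonneg _)
      · rw [hmid (x+1) (by omega) h]
        simp only [Nat.add_sub_cancel]
        omega
  -- upper bound 2^x on [1, n₂]
  have hup : ∀ x, 1 ≤ x → x ≤ n₂ → f x ≤ 2 ^ x := by
    intro x hx
    induction x, hx using Nat.le_induction with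
    | base => intro _; rw [hlo 1 le_rfl hn1pos]
    | succ x hx ih =>
      intro hx2
      have ihx := ih (by omega)
      rcases Nat.lt_or_ge n₁ (x+1) with h1 | h1
      · rcases Nat.lt_or_ge (d₁ * n₁) (x+1) with h2 | h2
        · rw [hhi (x+1) h2 hx2]
          simp only [Nat.add_sub_cancel]
          have hle : c * (f x : ℝ) ≤ ((2 ^ (x+1) : ℕ) : ℝ) := by
            have h3 : (f x : ℝ) ≤ ((2^x : ℕ) : ℝ) := by exact_mod_cast ihx
            push_cast
            calc c * (f x : ℝ) ≤ 2 * ((2:ℝ)^x) := by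
                  apply mul_le_mul hc2 (by exact_mod_cast ihx) (Nat.cast_nonneg _) (by norm_num)
              _ = 2 ^ (x+1) := by ring
          calc ⌊c * (f x : ℝ)⌋₊ ≤ ⌊((2 ^ (x+1) : ℕ) : ℝ)⌋₊ := Nat.floor_mono hle
            _ = 2 ^ (x+1) := Nat.floor_natCast _
        · rw [hmid (x+1) h1 h2]
          simp only [Nat.add_sub_cancel]
          have hx3 : x + 2 ≤ 2 ^ x := aux_lin x (by omega)
          have h1p : 2 ^ (x+1) = 2^x + 2^x := by ring
          omega
      · rw [hlo (x+1) (by omega) h1]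
  -- ratio bound on (n₁, n₂]
  have hratio : ∀ x, n₁ < x → x ≤ n₂ → (f x : ℝ) ≤ c * (f (x-1) : ℝ) := by
    intro x h1 h2
    rcases Nat.lt_or_ge (d₁ * n₁) x with h3 | h3
    · rw [hhi x h3 h2]
      exact Nat.floor_le (mul_nonneg hc0.le (Nat.cast_nonneg _))
    · rw [hmid x h1 h3]
      have hfl : 2 ^ n₁ ≤ f (x-1) := hlow (x-1) (by omega) (by omega)
      have hflR : ((2:ℝ) ^ n₁) ≤ (f (x-1) : ℝ) := by exact_mod_cast hfl
      push_cast [Nat.cast_sub (by omega : 1 ≤ x)]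
      have hn : ((x:ℝ) + 1) ≤ 1 / (4 * (d₁:ℝ)) * (f (x-1) : ℝ) := by
        have hx' : (x : ℝ) ≤ (d₁:ℝ) * (n₁:ℝ) := by exact_mod_cast h3
        have hnum' : 4 * (d₁:ℝ) * ((d₁:ℝ) * (n₁:ℝ) + 1) ≤ (2:ℝ) ^ n₁ := by
          exact_mod_cast hnum
        rw [one_div, inv_mul_eq_div, le_div_iff₀ (by linarith : (0:ℝ) < 4 * (d₁:ℝ))]
        nlinarith [hflR, hx', hnum', hdRpos]
      have hA : (1 + 1 / (4*(d₁:ℝ))) * (f (x-1) : ℝ) ≤ c * (f (x-1) : ℝ) :=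
        mul_le_mul_of_nonneg_right (le_of_lt hc4) (Nat.cast_nonneg _)
      have hexpand : (1 + 1 / (4*(d₁:ℝ))) * (f (x-1) : ℝ)
          = (f (x-1) : ℝ) + 1 / (4*(d₁:ℝ)) * (f (x-1) : ℝ) := by ring
      linarith
  -- growth lower bound above d₁n₁
  have hA0 : (0:ℝ) ≤ ((2:ℝ)^n₁ - 4*(d₁:ℝ)) := by
    have : ((8*d₁+1 : ℕ) : ℝ) ≤ ((2^n₁ : ℕ) : ℝ) := by exact_mod_cast h2n4d
    push_cast at this
    linarith
  have hgrow : ∀ x, d₁ * n₁ ≤ x → x ≤ n₂ →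
      ((2:ℝ)^n₁ - 4*(d₁:ℝ)) * c ^ (x - d₁*n₁) + 4*(d₁:ℝ) ≤ (f x : ℝ) := by
    intro x hx
    induction x, hx using Nat.le_induction with
    | base =>
      intro _
      simp only [Nat.sub_self, pow_zero, mul_one]
      have h1 : 2 ^ n₁ ≤ f (d₁*n₁) := hlow (d₁*n₁) hmn hmn₂
      have h2 : ((2:ℝ)^n₁) ≤ (f (d₁*n₁) : ℝ) := by exact_mod_cast h1
      linarith
    | succ x hx ih =>
      intro hx2
      have ihx := ih (by omega)
      rw [hhi (x+1) (by omega) hx2]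
      simp only [Nat.add_sub_cancel]
      have hfl : c * (f x : ℝ) - 1 ≤ (⌊c * (f x : ℝ)⌋₊ : ℝ) := by
        have := Nat.lt_floor_add_one (c * (f x : ℝ))
        linarith
      have hsub : x + 1 - d₁*n₁ = (x - d₁*n₁) + 1 := by omega
      rw [hsub, pow_succ]
      have h1 : c * (((2:ℝ)^n₁ - 4*(d₁:ℝ)) * c ^ (x - d₁*n₁) + 4*(d₁:ℝ)) ≤ c * (f x : ℝ) :=
        mul_le_mul_of_nonneg_left ihx (le_of_lt hc0)
      have h2 : (1:ℝ) ≤ (c - 1) * (4*(d₁:ℝ)) := by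
        have hh : 1 / (4*(d₁:ℝ)) ≤ c - 1 := by linarith
        calc (1:ℝ) = (1 / (4*(d₁:ℝ))) * (4*(d₁:ℝ)) := by field_simp
          _ ≤ (c-1) * (4*(d₁:ℝ)) := mul_le_mul_of_nonneg_right hh (by linarith)
      have hexpand : c * (((2:ℝ)^n₁ - 4*(d₁:ℝ)) * c ^ (x - d₁*n₁) + 4*(d₁:ℝ))
          = ((2:ℝ)^n₁ - 4*(d₁:ℝ)) * (c ^ (x - d₁*n₁) * c) + c * (4*(d₁:ℝ)) := by ring
      have h2e : (c - 1) * (4*(d₁:ℝ)) = c * (4*(d₁:ℝ)) - 4*(d₁:ℝ) := by ring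
      linarith
  -- c^p ≤ f p
  have hcp : ∀ p, 1 ≤ p → p ≤ n₂ → c ^ p ≤ (f p : ℝ) := by
    intro p hp1 hp2
    rcases Nat.lt_or_ge n₁ p with h1 | h1
    · rcases Nat.lt_or_ge (d₁*n₁) p with h2 | h2
      · have hg := hgrow p (by omega) hp2
        have hcm2 : (c ^ (d₁*n₁)) ^ 2 = (2:ℝ) ^ n₁ := by
          rw [← pow_mul]
          have he : d₁ * n₁ * 2 = (2*d₁) * n₁ := by ring
          rw [he, pow_mul, hcpow]
        have hX : (8*(d₁:ℝ) + 1) ≤ (2:ℝ)^n₁ := by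
          have : ((8*d₁+1 : ℕ) : ℝ) ≤ ((2^n₁ : ℕ) : ℝ) := by exact_mod_cast h2n4d
          push_cast at this; linarith
        have hAm : c ^ (d₁*n₁) ≤ (2:ℝ)^n₁ - 4*(d₁:ℝ) := by
          apply le_of_pow_le_pow_left₀ (two_ne_zero) hA0
          rw [hcm2]
          nlinarith [hX, hdRpos]
        calc c ^ p = c ^ (d₁*n₁) * c ^ (p - d₁*n₁) := by
              rw [← pow_add]; congr 1; omega
          _ ≤ ((2:ℝ)^n₁ - 4*(d₁:ℝ)) * c ^ (p - d₁*n₁) :=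
              mul_le_mul_of_nonneg_right hAm (by positivity)
          _ ≤ (f p : ℝ) := by linarith [hg, hdRpos]
      · have hfl : 2 ^ n₁ ≤ f p := hlow p (by omega) hp2
        have hflR : ((2:ℝ)^n₁) ≤ (f p : ℝ) := by exact_mod_cast hfl
        have e1 : c ^ (2*p) ≤ c ^ (2*(d₁*n₁)) := pow_le_pow_right₀ (le_of_lt hc1) (by omega)
        have e2 : c ^ (2*(d₁*n₁)) = (2:ℝ)^n₁ := by
          have he : 2 * (d₁*n₁) = (2*d₁) * n₁ := by ring
          rw [he, pow_mul, hcpow]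
        have e3 : c ^ p ≤ c ^ (2*p) := pow_le_pow_right₀ (le_of_lt hc1) (by omega)
        linarith
    · rw [hlo p hp1 h1]
      have : c ^ p ≤ (2:ℝ) ^ p := pow_le_pow_left₀ (le_of_lt hc0) hc2 p
      push_cast
      linarith
  -- iteration
  have hiter : ∀ i q', n₁ ≤ q' → q' + i ≤ n₂ → (f (q'+i) : ℝ) ≤ c ^ i * (f q' : ℝ) := by
    intro i
    induction i with
    | zero => intro q' h1 h2; simp
    | succ i ih =>
      intro q' h1 h2
      have h3 := ih q' h1 (by omega)
      have h4 : (f (q'+i+1) : ℝ) ≤ c * (f (q'+i) : ℝ) := by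
        have := hratio (q'+i+1) (by omega) (by omega)
        simpa using this
      calc (f (q'+(i+1)) : ℝ) = (f (q'+i+1) : ℝ) := by rw [← Nat.add_assoc]
        _ ≤ c * (f (q'+i) : ℝ) := h4
        _ ≤ c * (c ^ i * (f q' : ℝ)) := mul_le_mul_of_nonneg_left h3 (le_of_lt hc0)
        _ = c ^ (i+1) * (f q' : ℝ) := by ring
  -- key case
  have key : ∀ a b, 1 ≤ a → n₁ < b → a + b ≤ n₂ → f (a+b) ≤ f a * f b := by
    intro a b ha hb hab
    have h1 : (f (b+a) : ℝ) ≤ c ^ a * (f b : ℝ) := hiter a b (le_of_lt hb) (by omega)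
    have h2 : c ^ a ≤ (f a : ℝ) := hcp a ha (by omega)
    have h3 : (f (a+b) : ℝ) ≤ (f a : ℝ) * (f b : ℝ) := by
      rw [add_comm]
      calc (f (b+a) : ℝ) ≤ c ^ a * (f b : ℝ) := h1
        _ ≤ (f a : ℝ) * (f b : ℝ) := mul_le_mul_of_nonneg_right h2 (Nat.cast_nonneg _)
    exact_mod_cast h3
  intro p q hp hq hpq
  rcases Nat.lt_or_ge n₁ q with hq1 | hq1
  · exact key p q hp hq1 hpq
  · rcases Nat.lt_or_ge n₁ p with hp1 | hp1
    · calc f (p+q) = f (q+p) := by rw [add_comm]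
        _ ≤ f q * f p := key q p hq hp1 (by omega)
        _ = f p * f q := mul_comm _ _
    · rw [hlo p hp hp1, hlo q hq hq1, ← pow_add]
      exact hup (p+q) (by omega) hpq
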